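/- In the k-bonacci positions table, the bottom row can be written as X^{k−1}_n = n + X^0_n + X^1_n + ⋯ + X^{k−1}_n − X^{k−1}_n, i.e., X^{k−1}_n = n + X^0_n + ⋯ + X^{k−2}_n for all n ≥ 1. -/

import Mathlib

/-- The k-bonacci substitution on the alphabet {0,…,k−1}. -/
def subW (k : ℕ) (w : List ℕ) : List ℕ :=
  w.flatMap (fun j => if j + 1 < k then [0, j + 1] else [0])

/-- The k-bonacci word (0-indexed). -/
def kbonacci (k n : ℕ) : ℕ := ((subW k)^[n + 1] [0]).getD n 0

namespace KBaux

def W (k t : ℕ) : List ℕ := (subW k)^[t] [0]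

lemma subW_append (k : ℕ) (u v : List ℕ) : subW k (u ++ v) = subW k u ++ subW k v :=
  List.flatMap_append

lemma subW_cons (k a : ℕ) (l : List ℕ) :
    subW k (a :: l) = (if a + 1 < k then [0, a + 1] else [0]) ++ subW k l :=
  List.flatMap_cons ..

lemma W_succ (k t : ℕ) : W k (t + 1) = subW k (W k t) :=
  Function.iterate_succ_apply' _ _ _

lemma kbonacci_def (k m : ℕ) : kbonacci k m = (W k (m + 1)).getD m 0 := rfl

lemma length_subW_ge (k : ℕ) (l : List ℕ) : l.length ≤ (subW k l).length := by
  induction l with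
  | nil => simp [subW]
  | cons a l ih =>
      rw [subW_cons]
      simp only [List.length_cons, List.length_append]
      split <;> simp <;> omega

lemma prefix_step (k : ℕ) (hk : 2 ≤ k) (t : ℕ) : W k t <+: W k (t + 1) := by
  induction t with
  | zero =>
      rw [W_succ]
      show [0] <+: subW k [0]
      simp only [subW, List.flatMap_cons, List.flatMap_nil, List.append_nil]
      rw [if_pos (by omega)]
      exact ⟨[1], rfl⟩
  | succ t ih =>
      rw [W_succ, W_succ (t := t + 1)]
      obtain ⟨w, hw⟩ := ih
      exact ⟨subW k w, by rw [← subW_append, hw]⟩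

lemma prefix_mono (k : ℕ) (hk : 2 ≤ k) {s t : ℕ} (h : s ≤ t) : W k s <+: W k t := by
  induction t, h using Nat.le_induction with
  | base => exact List.prefix_rfl
  | succ t ht ih => exact ih.trans (prefix_step k hk t)

lemma W_head (k : ℕ) (hk : 2 ≤ k) (t : ℕ) : ∃ l, W k t = 0 :: l := by
  obtain ⟨w, hw⟩ := prefix_mono k hk (Nat.zero_le t)
  exact ⟨w, by rw [← hw]; rfl⟩

lemma length_W (k : ℕ) (hk : 2 ≤ k) (t : ℕ) : t + 1 ≤ (W k t).length := by
  induction t with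
  | zero => simp [W]
  | succ t ih =>
      obtain ⟨l, hl⟩ := W_head k hk t
      rw [W_succ, hl, subW_cons, if_pos (by omega)]
      have := length_subW_ge k l
      have : l.length + 1 = (W k t).length := by rw [hl]; simp
      simp only [List.length_append, List.length_cons]
      have h2 := length_subW_ge k l
      simp
      omega

lemma kbonacci_eq (k : ℕ) (hk : 2 ≤ k) {t m : ℕ} (hm : m < (W k t).length) :
    kbonacci k m = (W k t).getD m 0 := by
  rw [kbonacci_def]
  rcases le_total t (m + 1) with h | h
  · obtain ⟨w, hw⟩ := prefix_mono k hk h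
    rw [← hw, List.getD_append _ _ _ _ hm]
  · obtain ⟨w, hw⟩ := prefix_mono k hk h
    rw [← hw, List.getD_append]
    have := length_W k hk (m + 1)
    omega

lemma mem_W_lt (k : ℕ) (hk : 2 ≤ k) (t : ℕ) : ∀ x ∈ W k t, x < k := by
  induction t with
  | zero => intro x hx; simp [W] at hx; omega
  | succ t ih =>
      rw [W_succ]
      intro x hx
      simp only [subW, List.mem_flatMap] at hx
      obtain ⟨j, hj, hx⟩ := hx
      by_cases hc : j + 1 < k
      · rw [if_pos hc] at hx
        simp at hx
        rcases hx with rfl | rfl <;> omega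
      · rw [if_neg hc] at hx
        simp at hx
        omega

lemma kb_lt (k : ℕ) (hk : 2 ≤ k) (m : ℕ) : kbonacci k m < k := by
  have hm : m < (W k (m + 1)).length := by have := length_W k hk (m + 1); omega
  rw [kbonacci_eq k hk hm, List.getD_eq_getElem _ _ hm]
  exact mem_W_lt k hk (m + 1) _ (List.getElem_mem _)

/-- The block map: position of the start of the image of the m-th letter. -/
def F (k m : ℕ) : ℕ := m + Nat.count (fun i => kbonacci k i ≠ k - 1) m

lemma F_zero (k : ℕ) : F k 0 = 0 := rfl

lemma F_succ (k m : ℕ) :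
    F k (m + 1) = F k m + (if kbonacci k m = k - 1 then 1 else 2) := by
  simp only [F, Nat.count_succ]
  rcases eq_or_ne (kbonacci k m) (k - 1) with h | h <;> simp [h] <;> omega

lemma F_strictMono (k : ℕ) : StrictMono (F k) := by
  apply strictMono_nat_of_lt_succ
  intro m
  rw [F_succ]; split <;> omega

lemma le_F (k m : ℕ) : m ≤ F k m := Nat.le_add_right _ _

lemma exists_interval (k p : ℕ) : ∃ m, F k m ≤ p ∧ p < F k (m + 1) := by
  have h1 : ∃ t, p < F k t := ⟨p + 1, lt_of_lt_of_le (Nat.lt_succ_self p) (le_F _ _)⟩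
  have ht : p < F k (Nat.find h1) := Nat.find_spec h1
  have ht0 : Nat.find h1 ≠ 0 := by
    intro h; rw [h, F_zero] at ht; omega
  obtain ⟨m, hm⟩ := Nat.exists_eq_succ_of_ne_zero ht0
  have h2 : ¬ p < F k m := Nat.find_min h1 (by omega)
  rw [hm] at ht
  exact ⟨m, by omega, ht⟩

lemma length_subW_take (k : ℕ) (hk : 2 ≤ k) (t : ℕ) :
    ∀ m, m ≤ (W k t).length → (subW k ((W k t).take m)).length = F k m := by
  intro m
  induction m with
  | zero => intro _; simp [subW, F_zero]
  | succ m ih =>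
      intro hm
      have hmlt : m < (W k t).length := by omega
      rw [List.take_succ, List.getElem?_eq_getElem hmlt]
      rw [subW_append, List.length_append, ih (by omega), F_succ]
      have hval : (W k t)[m] = kbonacci k m := by
        rw [kbonacci_eq k hk hmlt, List.getD_eq_getElem _ _ hmlt]
      simp only [Option.toList_some, subW_cons]
      rw [hval]
      have := kb_lt k hk m
      split
      · rw [if_neg (by omega)]; simp [subW]
      · rw [if_pos (by omega)]; simp [subW]

/-- Decomposition of the word at the image of position m. -/
lemma decomp (k : ℕ) (hk : 2 ≤ k) (m : ℕ) :
    ∃ u rest, W k (m + 2) = u ++ (0 :: rest) ∧ u.length = F k m ∧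
      (kbonacci k m ≠ k - 1 → ∃ rest', rest = (kbonacci k m + 1) :: rest') := by
  set t := m + 1 with htdef
  have hmlt : m < (W k t).length := by have := length_W k hk t; omega
  have hW : W k (t + 1) = subW k ((W k t).take m) ++ subW k ((W k t).drop m) := by
    rw [W_succ, ← subW_append, List.take_append_drop]
  have hdrop : (W k t).drop m = kbonacci k m :: (W k t).drop (m + 1) := by
    rw [List.drop_eq_getElem_cons hmlt]
    congr 1
    rw [kbonacci_eq k hk hmlt, List.getD_eq_getElem _ _ hmlt]
  refine ⟨subW k ((W k t).take m), ?_, ?_, length_subW_take k hk t m (by omega), ?_⟩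
  · exact if kbonacci k m + 1 < k then (kbonacci k m + 1) :: subW k ((W k t).drop (m + 1))
      else subW k ((W k t).drop (m + 1))
  · rw [show m + 2 = t + 1 from rfl, hW, hdrop, subW_cons]
    split <;> simp
  · intro h
    have := kb_lt k hk m
    rw [if_pos (by omega)]
    exact ⟨_, rfl⟩

lemma key1 (k : ℕ) (hk : 2 ≤ k) (m : ℕ) : kbonacci k (F k m) = 0 := by
  obtain ⟨u, rest, hW, hu, -⟩ := decomp k hk m
  have hlen : F k m < (W k (m + 2)).length := by
    rw [hW]; simp; omega
  rw [kbonacci_eq k hk hlen, hW, List.getD_append_right _ _ _ _ (by omega)]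
  rw [hu]; simp

lemma key2 (k : ℕ) (hk : 2 ≤ k) {m : ℕ} (h : kbonacci k m ≠ k - 1) :
    kbonacci k (F k m + 1) = kbonacci k m + 1 := by
  obtain ⟨u, rest, hW, hu, hr⟩ := decomp k hk m
  obtain ⟨rest', rfl⟩ := hr h
  have hlen : F k m + 1 < (W k (m + 2)).length := by
    rw [hW]; simp; omega
  rw [kbonacci_eq k hk hlen, hW, List.getD_append_right _ _ _ _ (by omega)]
  rw [hu]; simp

lemma zero_iff (k : ℕ) (hk : 2 ≤ k) (p : ℕ) :
    kbonacci k p = 0 ↔ ∃ m, p = F k m := by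
  constructor
  · intro hp
    obtain ⟨m, h1, h2⟩ := exists_interval k p
    rw [F_succ] at h2
    by_cases hc : kbonacci k m = k - 1
    · rw [if_pos hc] at h2
      exact ⟨m, by omega⟩
    · rw [if_neg hc] at h2
      rcases (by omega : p = F k m ∨ p = F k m + 1) with h | h
      · exact ⟨m, h⟩
      · exfalso
        rw [h, key2 k hk hc] at hp
        omega
  · rintro ⟨m, rfl⟩
    exact key1 k hk m

lemma succ_iff (k : ℕ) (hk : 2 ≤ k) {l : ℕ} (hl : l ≠ k - 1) (p : ℕ) :
    kbonacci k p = l + 1 ↔ ∃ m, kbonacci k m = l ∧ p = F k m + 1 := by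
  constructor
  · intro hp
    obtain ⟨m, h1, h2⟩ := exists_interval k p
    rw [F_succ] at h2
    by_cases hc : kbonacci k m = k - 1
    · rw [if_pos hc] at h2
      have : p = F k m := by omega
      rw [this, key1 k hk] at hp
      omega
    · rw [if_neg hc] at h2
      rcases (by omega : p = F k m ∨ p = F k m + 1) with h | h
      · rw [h, key1 k hk] at hp; omega
      · rw [h, key2 k hk hc] at hp
        exact ⟨m, by omega, h⟩
  · rintro ⟨m, hm, rfl⟩
    rw [key2 k hk (by omega), hm]

lemma count_zero_F (k : ℕ) (hk : 2 ≤ k) (a : ℕ) :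
    Nat.count (fun m => kbonacci k m = 0) (F k a) = a := by
  rw [Nat.count_eq_card_filter_range]
  have : Finset.filter (fun m => kbonacci k m = 0) (Finset.range (F k a)) =
      (Finset.range a).image (F k) := by
    ext p
    simp only [Finset.mem_filter, Finset.mem_range, Finset.mem_image]
    constructor
    · rintro ⟨hp, hz⟩
      obtain ⟨m, rfl⟩ := (zero_iff k hk p).1 hz
      exact ⟨m, (F_strictMono k).lt_iff_lt.1 hp, rfl⟩
    · rintro ⟨m, hm, rfl⟩
      exact ⟨(F_strictMono k) hm, key1 k hk m⟩
  rw [this, Finset.card_image_of_injective _ (F_strictMono k).injective, Finset.card_range]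

lemma count_succ_F (k : ℕ) (hk : 2 ≤ k) {l : ℕ} (hl : l ≠ k - 1) (a : ℕ) :
    Nat.count (fun m => kbonacci k m = l + 1) (F k a + 1) =
      Nat.count (fun m => kbonacci k m = l) a := by
  rw [Nat.count_eq_card_filter_range, Nat.count_eq_card_filter_range]
  have : Finset.filter (fun m => kbonacci k m = l + 1) (Finset.range (F k a + 1)) =
      (Finset.filter (fun m => kbonacci k m = l) (Finset.range a)).image (fun m => F k m + 1) := by
    ext p
    simp only [Finset.mem_filter, Finset.mem_range, Finset.mem_image]
    constructor
    · rintro ⟨hp, hz⟩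
      obtain ⟨m, hm, rfl⟩ := (succ_iff k hk hl p).1 hz
      refine ⟨m, ⟨?_, hm⟩, rfl⟩
      by_contra hma
      have : F k a ≤ F k m := (F_strictMono k).le_iff_le.2 (by omega)
      omega
    · rintro ⟨m, ⟨hma, hm⟩, rfl⟩
      refine ⟨?_, (succ_iff k hk hl _).2 ⟨m, hm, rfl⟩⟩
      have h2 : F k (m + 1) = F k m + 2 := by
        rw [F_succ, if_neg (by omega)]
      have : F k (m + 1) ≤ F k a := (F_strictMono k).le_iff_le.2 (by omega)
      omega
  rw [this, Finset.card_image_of_injective]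
  intro x y h
  have h' : F k x + 1 = F k y + 1 := h
  exact (F_strictMono k).injective (by omega)

lemma letters_infinite (k : ℕ) (hk : 2 ≤ k) : ∀ l, l < k →
    {m | kbonacci k m = l}.Infinite := by
  intro l
  induction l with
  | zero =>
      intro _
      apply Set.infinite_of_injective_forall_mem (f := F k) (F_strictMono k).injective
      intro a
      exact key1 k hk a
  | succ l ih =>
      intro hl
      have h1 : {m | kbonacci k m = l}.Infinite := ih (by omega)
      have hinj : Function.Injective (fun m => F k m + 1) := by
        intro x y h
        have h' : F k x + 1 = F k y + 1 := h
        exact (F_strictMono k).injective (by omega)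
      have h2 := h1.image (Set.injOn_of_injective hinj)
      apply h2.mono
      rintro p ⟨m, hm, rfl⟩
      exact (succ_iff k hk (by omega) _).2 ⟨m, hm, rfl⟩

lemma nth_zero_eq (k : ℕ) (hk : 2 ≤ k) (i : ℕ) :
    Nat.nth (fun m => kbonacci k m = 0) i = F k i := by
  have h := Nat.nth_count (p := fun m => kbonacci k m = 0) (key1 k hk i)
  rwa [count_zero_F k hk i] at h

lemma nth_succ_eq (k : ℕ) (hk : 2 ≤ k) {l : ℕ} (hl : l + 1 < k) (i : ℕ) :
    Nat.nth (fun m => kbonacci k m = l + 1) i =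
      F k (Nat.nth (fun m => kbonacci k m = l) i) + 1 := by
  have hmem : kbonacci k (Nat.nth (fun m => kbonacci k m = l) i) = l :=
    Nat.nth_mem_of_infinite (letters_infinite k hk l (by omega)) i
  have hp : kbonacci k (F k (Nat.nth (fun m => kbonacci k m = l) i) + 1) = l + 1 := by
    rw [key2 k hk (by omega), hmem]
  have h := Nat.nth_count (p := fun m => kbonacci k m = l + 1) hp
  rwa [count_succ_F k hk (by omega),
    Nat.count_nth_of_infinite (letters_infinite k hk l (by omega))] at h

lemma count_compl (k m : ℕ) :
    Nat.count (fun i => kbonacci k i = k - 1) m +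
      Nat.count (fun i => kbonacci k i ≠ k - 1) m = m := by
  induction m with
  | zero => rfl
  | succ m ih =>
      simp only [Nat.count_succ]
      by_cases h : kbonacci k m = k - 1
      · rw [if_pos h, if_neg (not_not_intro h)]
        omega
      · rw [if_neg h, if_pos h]
        omega

lemma sum_count (k : ℕ) (hk : 2 ≤ k) (m : ℕ) :
    ∑ l ∈ Finset.range k, Nat.count (fun i => kbonacci k i = l) m = m := by
  induction m with
  | zero => simp
  | succ m ih =>
      simp only [Nat.count_succ]
      rw [Finset.sum_add_distrib, ih]
      have : ∑ l ∈ Finset.range k, (if kbonacci k m = l then 1 else 0) = 1 := by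
        rw [Finset.sum_ite_eq]
        simp [Finset.mem_range.2 (kb_lt k hk m)]
      omega

lemma main (K : ℕ) (hK : 1 ≤ K) (i : ℕ) (a : ℕ → ℕ)
    (ha : ∀ j, a j = Nat.nth (fun m => kbonacci (K + 1) m = j) i) :
    a K + 1 = (i + 1) + ∑ j ∈ Finset.range K, (a j + 1) := by
  have hk : 2 ≤ K + 1 := by omega
  have ha0 : a 0 = F (K + 1) i := by rw [ha]; exact nth_zero_eq (K + 1) hk i
  have harec : ∀ j, j < K → a (j + 1) = F (K + 1) (a j) + 1 := by
    intro j hj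
    rw [ha, ha]
    exact nth_succ_eq (K + 1) hk (by omega : j + 1 < K + 1) i
  have hH : ∀ j l, 1 ≤ l → l + j ≤ K →
      Nat.count (fun m => kbonacci (K + 1) m = l + j) (a j) =
      Nat.count (fun m => kbonacci (K + 1) m = l) (a 0) := by
    intro j
    induction j with
    | zero => intro l _ _; simp
    | succ j ih =>
        intro l hl hlj
        rw [harec j (by omega), ← Nat.add_assoc,
          count_succ_F (K + 1) hk (show l + j ≠ K + 1 - 1 by omega) (a j)]
        exact ih l hl (by omega)
  have hNj : ∀ j, j < K →
      Nat.count (fun m => kbonacci (K + 1) m = K) (a j) =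
      Nat.count (fun m => kbonacci (K + 1) m = K - j) (a 0) := by
    intro j hj
    have h := hH j (K - j) (by omega) (by omega)
    rwa [show K - j + j = K from by omega] at h
  have hsum1 : ∑ j ∈ Finset.range K, Nat.count (fun m => kbonacci (K + 1) m = K) (a j)
      = ∑ l ∈ Finset.range K, Nat.count (fun m => kbonacci (K + 1) m = l + 1) (a 0) := by
    have hs : ∀ j ∈ Finset.range K,
        Nat.count (fun m => kbonacci (K + 1) m = K) (a j) =
        (fun l => Nat.count (fun m => kbonacci (K + 1) m = l + 1) (a 0)) (K - 1 - j) := by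
      intro j hj
      rw [Finset.mem_range] at hj
      simp only []
      rw [show K - 1 - j + 1 = K - j from by omega]
      exact hNj j hj
    rw [Finset.sum_congr rfl hs]
    exact Finset.sum_range_reflect (fun l => Nat.count (fun m => kbonacci (K + 1) m = l + 1) (a 0)) K
  have hsplit : (∑ l ∈ Finset.range K,
      Nat.count (fun m => kbonacci (K + 1) m = l + 1) (a 0)) +
      Nat.count (fun m => kbonacci (K + 1) m = 0) (a 0) = a 0 := by
    have h := sum_count (K + 1) hk (a 0)
    rwa [Finset.sum_range_succ'] at h
  have hN0 : Nat.count (fun m => kbonacci (K + 1) m = 0) (a 0) = i := by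
    rw [ha0]; exact count_zero_F (K + 1) hk i
  have hstep : ∀ j, j < K →
      a (j + 1) + Nat.count (fun m => kbonacci (K + 1) m = K) (a j) = 2 * a j + 1 := by
    intro j hj
    have h1 := harec j hj
    have hF : F (K + 1) (a j) = a j +
        Nat.count (fun m => kbonacci (K + 1) m ≠ K + 1 - 1) (a j) := rfl
    have hc := count_compl (K + 1) (a j)
    simp only [Nat.add_sub_cancel] at hF hc
    omega
  have hsum2 : (∑ j ∈ Finset.range K, a (j + 1)) +
      (∑ j ∈ Finset.range K, Nat.count (fun m => kbonacci (K + 1) m = K) (a j)) =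
      2 * (∑ j ∈ Finset.range K, a j) + K := by
    have h := Finset.sum_congr rfl (fun j hj => hstep j (Finset.mem_range.1 hj))
    rw [Finset.sum_add_distrib, Finset.sum_add_distrib, ← Finset.mul_sum,
      Finset.sum_const, Finset.card_range, smul_eq_mul, mul_one] at h
    exact h
  have h5 := Finset.sum_range_succ' a K
  have h6 := Finset.sum_range_succ a K
  rw [Finset.sum_add_distrib, Finset.sum_const, Finset.card_range, smul_eq_mul, mul_one]
  omega

end KBaux

/-- X^j_n: the 1-based position of the n-th (1-based) occurrence of letter j. -/
noncomputable def Xpos (k j n : ℕ) : ℕ :=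
  Nat.nth (fun m => kbonacci k m = j) (n - 1) + 1

/-- The bottom row of the k-bonacci positions table is the enumerating sequence
plus the sum of the other rows: X^{k−1}_n = n + X^0_n + ⋯ + X^{k−2}_n. -/
theorem bottom_row_is_sum (k : ℕ) (hk : 2 ≤ k) (n : ℕ) (hn : 1 ≤ n) :
    Xpos k (k - 1) n = n + ∑ j ∈ Finset.range (k - 1), Xpos k j n := by
  obtain ⟨K, rfl⟩ : ∃ K, k = K + 1 := ⟨k - 1, by omega⟩
  obtain ⟨m, rfl⟩ : ∃ m, n = m + 1 := ⟨n - 1, by omega⟩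
  simp only [Xpos, Nat.add_sub_cancel]
  exact KBaux.main K (by omega) m _ (fun j => rfl)
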